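/- Let (H, R) be a quasitriangular quasi-Hopf algebra with Drinfeld element u = S(R²x²βS(x³))αR¹x¹. Then the central element uS(u) satisfies Δ(uS(u)) = (uS(u) ⊗ uS(u)) (R₂₁R)⁻². -/

import Mathlib

open TensorProduct BigOperators

/-- A quasi-bialgebra (Drinfeld), with reassociator `Φ` presented as an explicit finite
sum of pure tensors `∑ i, X1 i ⊗ X2 i ⊗ X3 i`, and `Φ⁻¹ = ∑ j, x1 j ⊗ x2 j ⊗ x3 j`. -/
structure QuasiBialgebra (k H : Type*) [Field k] [Ring H] [Algebra k H]
    (ι κ : Type*) [Fintype ι] [Fintype κ] where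
  Δ : H →ₐ[k] H ⊗[k] H
  ε : H →ₐ[k] k
  X1 : ι → H
  X2 : ι → H
  X3 : ι → H
  x1 : κ → H
  x2 : κ → H
  x3 : κ → H
  Φ_inv_right :
    (∑ i, X1 i ⊗ₜ[k] (X2 i ⊗ₜ[k] X3 i)) * (∑ j, x1 j ⊗ₜ[k] (x2 j ⊗ₜ[k] x3 j)) = 1
  Φ_inv_left :
    (∑ j, x1 j ⊗ₜ[k] (x2 j ⊗ₜ[k] x3 j)) * (∑ i, X1 i ⊗ₜ[k] (X2 i ⊗ₜ[k] X3 i)) = 1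
  quasi_coassoc : ∀ h : H,
    (Algebra.TensorProduct.map (AlgHom.id k H) Δ) (Δ h)
        * (∑ i, X1 i ⊗ₜ[k] (X2 i ⊗ₜ[k] X3 i)) =
      (∑ i, X1 i ⊗ₜ[k] (X2 i ⊗ₜ[k] X3 i))
        * (Algebra.TensorProduct.assoc k k k H H H)
            ((Algebra.TensorProduct.map Δ (AlgHom.id k H)) (Δ h))
  counit_right : ∀ h : H,
    (TensorProduct.rid k H) (TensorProduct.map LinearMap.id ε.toLinearMap (Δ h)) = h
  counit_left : ∀ h : H,
    (TensorProduct.lid k H) (TensorProduct.map ε.toLinearMap LinearMap.id (Δ h)) = h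
  cocycle :
    ((∑ i, (1 : H) ⊗ₜ[k] (X1 i ⊗ₜ[k] (X2 i ⊗ₜ[k] X3 i)))
        * (∑ i, X1 i ⊗ₜ[k] ((Algebra.TensorProduct.assoc k k k H H H) (Δ (X2 i) ⊗ₜ[k] X3 i)))
        * (∑ i, X1 i ⊗ₜ[k] (X2 i ⊗ₜ[k] (X3 i ⊗ₜ[k] (1 : H)))))
      = (∑ i, X1 i ⊗ₜ[k] (X2 i ⊗ₜ[k] Δ (X3 i)))
        * (∑ i, (Algebra.TensorProduct.assoc k k k H H (H ⊗[k] H))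
            (Δ (X1 i) ⊗ₜ[k] (X2 i ⊗ₜ[k] X3 i)))
  counit_Φ : (∑ i, ε (X2 i) • (X1 i ⊗ₜ[k] X3 i)) = 1

/-- A quasi-Hopf algebra: a quasi-bialgebra with an anti-algebra map `S` and
distinguished elements `α`, `β` satisfying Drinfeld's antipode axioms. -/
structure QuasiHopf (k H : Type*) [Field k] [Ring H] [Algebra k H]
    (ι κ : Type*) [Fintype ι] [Fintype κ] extends QuasiBialgebra k H ι κ where
  S : H →ₗ[k] H
  S_mul : ∀ a b : H, S (a * b) = S b * S a
  S_one : S 1 = 1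
  α : H
  β : H
  antipode_left : ∀ h : H,
    LinearMap.mul' k H
      (TensorProduct.map ((LinearMap.mulRight k α).comp S) LinearMap.id (Δ h)) = ε h • α
  antipode_right : ∀ h : H,
    LinearMap.mul' k H
      (TensorProduct.map (LinearMap.mulRight k β) S (Δ h)) = ε h • β
  antipode_Φ : ∑ i, X1 i * β * S (X2 i) * α * X3 i = 1
  antipode_Φinv : ∑ j, S (x1 j) * α * x2 j * β * S (x3 j) = 1

/-- A quasitriangular quasi-Hopf algebra: `R = ∑ a, r1 a ⊗ r2 a`,
`R⁻¹ = ∑ b, ri1 b ⊗ ri2 b`, with the quasitriangularity axioms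
`(Δ ⊗ id)(R) = Φ₂₃₁ R₁₃ Φ₁₃₂⁻¹ R₂₃ Φ`, `(id ⊗ Δ)(R) = Φ₂₃₁⁻¹ R₁₃ Φ₂₁₃ R₁₂ Φ⁻¹`
and `Δᶜᵒᵖ(h) R = R Δ(h)`, all written out on pure tensors. -/
structure QuasiTriangular (k H : Type*) [Field k] [Ring H] [Algebra k H]
    (ι κ ρ σ : Type*) [Fintype ι] [Fintype κ] [Fintype ρ] [Fintype σ]
    extends QuasiHopf k H ι κ where
  r1 : ρ → H
  r2 : ρ → H
  ri1 : σ → H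
  ri2 : σ → H
  R_inv_right : (∑ a, r1 a ⊗ₜ[k] r2 a) * (∑ b, ri1 b ⊗ₜ[k] ri2 b) = 1
  R_inv_left : (∑ b, ri1 b ⊗ₜ[k] ri2 b) * (∑ a, r1 a ⊗ₜ[k] r2 a) = 1
  qt1 : (∑ a, (Algebra.TensorProduct.assoc k k k H H H) (Δ (r1 a) ⊗ₜ[k] r2 a))
      = (∑ i, X2 i ⊗ₜ[k] (X3 i ⊗ₜ[k] X1 i))
        * (∑ a, r1 a ⊗ₜ[k] ((1 : H) ⊗ₜ[k] r2 a))
        * (∑ j, x1 j ⊗ₜ[k] (x3 j ⊗ₜ[k] x2 j))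
        * (∑ a, (1 : H) ⊗ₜ[k] (r1 a ⊗ₜ[k] r2 a))
        * (∑ i, X1 i ⊗ₜ[k] (X2 i ⊗ₜ[k] X3 i))
  qt2 : (∑ a, r1 a ⊗ₜ[k] Δ (r2 a))
      = (∑ j, x3 j ⊗ₜ[k] (x1 j ⊗ₜ[k] x2 j))
        * (∑ a, r1 a ⊗ₜ[k] ((1 : H) ⊗ₜ[k] r2 a))
        * (∑ i, X2 i ⊗ₜ[k] (X1 i ⊗ₜ[k] X3 i))
        * (∑ a, r1 a ⊗ₜ[k] (r2 a ⊗ₜ[k] (1 : H)))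
        * (∑ j, x1 j ⊗ₜ[k] (x2 j ⊗ₜ[k] x3 j))
  qt3 : ∀ h : H,
    (TensorProduct.comm k H H) (Δ h) * (∑ a, r1 a ⊗ₜ[k] r2 a)
      = (∑ a, r1 a ⊗ₜ[k] r2 a) * Δ h

/-- The Drinfeld element `u = S(R² x² β S(x³)) α R¹ x¹` of a quasitriangular
quasi-Hopf algebra. -/
noncomputable def QuasiTriangular.u {k H : Type*} [Field k] [Ring H] [Algebra k H]
    {ι κ ρ σ : Type*} [Fintype ι] [Fintype κ] [Fintype ρ] [Fintype σ]
    (Q : QuasiTriangular k H ι κ ρ σ) : H :=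
  ∑ a, ∑ j, Q.S (Q.r2 a * Q.x2 j * Q.β * Q.S (Q.x3 j)) * Q.α * (Q.r1 a * Q.x1 j)

private lemma comm_mul' {k H : Type*} [Field k] [Ring H] [Algebra k H]
    (x y : H ⊗[k] H) :
    (TensorProduct.comm k H H) (x * y)
      = (TensorProduct.comm k H H) x * (TensorProduct.comm k H H) y := by
  induction x using TensorProduct.induction_on with
  | zero => simp
  | tmul a b =>
    induction y using TensorProduct.induction_on with
    | zero => simp
    | tmul c d => simp [Algebra.TensorProduct.tmul_mul_tmul]
    | add y1 y2 h1 h2 => simp only [mul_add, map_add, h1, h2]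
  | add x1 x2 h1 h2 => simp only [add_mul, map_add, h1, h2]

private lemma comm_comm' {k H : Type*} [Field k] [Ring H] [Algebra k H]
    (x : H ⊗[k] H) :
    (TensorProduct.comm k H H) ((TensorProduct.comm k H H) x) = x := by
  induction x using TensorProduct.induction_on with
  | zero => simp
  | tmul a b => simp
  | add x1 x2 h1 h2 => simp only [map_add, h1, h2]

private lemma mapSS_antimul {k H : Type*} [Field k] [Ring H] [Algebra k H]
    (S : H →ₗ[k] H) (hS : ∀ a b : H, S (a * b) = S b * S a)
    (x y : H ⊗[k] H) :
    TensorProduct.map S S (x * y)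
      = TensorProduct.map S S y * TensorProduct.map S S x := by
  induction x using TensorProduct.induction_on with
  | zero => simp
  | tmul a b =>
    induction y using TensorProduct.induction_on with
    | zero => simp
    | tmul c d => simp [Algebra.TensorProduct.tmul_mul_tmul, hS]
    | add y1 y2 h1 h2 => simp only [mul_add, add_mul, map_add, h1, h2]
  | add x1 x2 h1 h2 => simp only [add_mul, mul_add, map_add, h1, h2]

private lemma tmul_central {k H : Type*} [Field k] [Ring H] [Algebra k H]
    (c c' : H) (hc : ∀ h : H, c * h = h * c) (hc' : ∀ h : H, c' * h = h * c')
    (z : H ⊗[k] H) : (c ⊗ₜ[k] c') * z = z * (c ⊗ₜ[k] c') := by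
  induction z using TensorProduct.induction_on with
  | zero => simp
  | tmul a b => simp [Algebra.TensorProduct.tmul_mul_tmul, hc, hc']
  | add z1 z2 h1 h2 => simp only [mul_add, add_mul, h1, h2]

/-- For a quasitriangular quasi-Hopf algebra with Drinfeld element
`u = S(R²x²βS(x³))αR¹x¹`, the central element `uS(u)` satisfies
`Δ(uS(u)) = (uS(u) ⊗ uS(u)) (R₂₁R)⁻²`. -/
theorem coproduct_uSu
    {k H : Type*} [Field k] [Ring H] [Algebra k H]
    {ι κ ρ σ : Type*} [Fintype ι] [Fintype κ] [Fintype ρ] [Fintype σ]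
    (Q : QuasiTriangular k H ι κ ρ σ)
    (fT fTi : H ⊗[k] H)
    (hf_inv : fT * fTi = 1) (hf_inv' : fTi * fT = 1)
    (hf_S : ∀ h : H, fT * Q.Δ (Q.S h) * fTi
      = TensorProduct.map Q.S Q.S ((TensorProduct.comm k H H) (Q.Δ h)))
    -- the inverse of `R₂₁R`
    (Tinv : H ⊗[k] H)
    (hT : ((TensorProduct.comm k H H) (∑ a, Q.r1 a ⊗ₜ[k] Q.r2 a)
        * (∑ a, Q.r1 a ⊗ₜ[k] Q.r2 a)) * Tinv = 1)
    (hT' : Tinv * ((TensorProduct.comm k H H) (∑ a, Q.r1 a ⊗ₜ[k] Q.r2 a)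
        * (∑ a, Q.r1 a ⊗ₜ[k] Q.r2 a)) = 1)
    -- known properties of the Drinfeld element `u`
    (hS2 : ∀ h : H, Q.S (Q.S h) * Q.u = Q.u * h)
    (hu_central : ∀ h : H, (Q.u * Q.S Q.u) * h = h * (Q.u * Q.S Q.u))
    (huSu : Q.u * Q.S Q.u = Q.S Q.u * Q.u)
    (hΔu : Q.Δ Q.u
      = Tinv * fTi * TensorProduct.map Q.S Q.S ((TensorProduct.comm k H H) fT)
          * (Q.u ⊗ₜ[k] Q.u))
    (hΔSu : Q.Δ (Q.S Q.u)
      = Tinv * ((Q.S Q.u) ⊗ₜ[k] (Q.S Q.u))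
          * TensorProduct.map Q.S Q.S ((TensorProduct.comm k H H) fTi) * fT) :
    Q.Δ (Q.u * Q.S Q.u)
      = ((Q.u * Q.S Q.u) ⊗ₜ[k] (Q.u * Q.S Q.u)) * (Tinv * Tinv) := by
  classical
  set Rm : H ⊗[k] H := ∑ a, Q.r1 a ⊗ₜ[k] Q.r2 a with hRm
  -- `T = R₂₁ R` commutes with every `Δ h`
  have hTcomm : ∀ h : H,
      ((TensorProduct.comm k H H) Rm * Rm) * Q.Δ h
        = Q.Δ h * ((TensorProduct.comm k H H) Rm * Rm) := by
    intro h
    have h1 := Q.qt3 h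
    rw [← hRm] at h1
    have h2 : Q.Δ h * (TensorProduct.comm k H H) Rm
        = (TensorProduct.comm k H H) Rm * (TensorProduct.comm k H H) (Q.Δ h) := by
      have := congrArg (TensorProduct.comm k H H) h1
      rw [comm_mul', comm_mul', comm_comm'] at this
      exact this
    calc ((TensorProduct.comm k H H) Rm * Rm) * Q.Δ h
        = (TensorProduct.comm k H H) Rm * ((TensorProduct.comm k H H) (Q.Δ h) * Rm) := by
          rw [mul_assoc, h1]
      _ = (Q.Δ h * (TensorProduct.comm k H H) Rm) * Rm := by
          rw [h2, mul_assoc]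
      _ = Q.Δ h * ((TensorProduct.comm k H H) Rm * Rm) := by rw [mul_assoc]
  have hTinvComm : ∀ h : H, Tinv * Q.Δ h = Q.Δ h * Tinv := by
    intro h
    calc Tinv * Q.Δ h
        = Tinv * Q.Δ h * (((TensorProduct.comm k H H) Rm * Rm) * Tinv) := by
          rw [hT, mul_one]
      _ = Tinv * (Q.Δ h * ((TensorProduct.comm k H H) Rm * Rm)) * Tinv := by
          simp only [mul_assoc]
      _ = (Tinv * ((TensorProduct.comm k H H) Rm * Rm)) * (Q.Δ h * Tinv) := by
          rw [← hTcomm]; simp only [mul_assoc]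
      _ = Q.Δ h * Tinv := by rw [hT', one_mul]
  -- `F X = (S ⊗ S)(X₂₁)`
  set F : H ⊗[k] H → H ⊗[k] H :=
    fun z => TensorProduct.map Q.S Q.S ((TensorProduct.comm k H H) z) with hF
  have hFanti : ∀ x y : H ⊗[k] H, F (x * y) = F y * F x := by
    intro x y
    simp only [hF]
    rw [comm_mul', mapSS_antimul Q.S Q.S_mul]
  have hFone : F 1 = 1 := by
    simp only [hF, Algebra.TensorProduct.one_def]
    simp [Q.S_one]
  have hFf : F fT * F fTi = 1 := by
    rw [← hFanti, hf_inv', hFone]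
  -- centrality of `u S(u) ⊗ u S(u)`
  have hcent : ∀ z : H ⊗[k] H,
      ((Q.u * Q.S Q.u) ⊗ₜ[k] (Q.u * Q.S Q.u)) * z
        = z * ((Q.u * Q.S Q.u) ⊗ₜ[k] (Q.u * Q.S Q.u)) :=
    tmul_central _ _ hu_central hu_central
  -- main computation
  calc Q.Δ (Q.u * Q.S Q.u)
      = Q.Δ Q.u * Q.Δ (Q.S Q.u) := by rw [map_mul]
    _ = Q.Δ Q.u * (Tinv * (((Q.S Q.u) ⊗ₜ[k] (Q.S Q.u)) * (F fTi * fT))) := by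
        rw [hΔSu]; simp only [hF]; simp only [mul_assoc]
    _ = (Q.Δ Q.u * Tinv) * (((Q.S Q.u) ⊗ₜ[k] (Q.S Q.u)) * (F fTi * fT)) := by
        rw [mul_assoc]
    _ = (Tinv * Q.Δ Q.u) * (((Q.S Q.u) ⊗ₜ[k] (Q.S Q.u)) * (F fTi * fT)) := by
        rw [hTinvComm]
    _ = Tinv * (Tinv * (fTi * (F fT * ((Q.u ⊗ₜ[k] Q.u)
          * (((Q.S Q.u) ⊗ₜ[k] (Q.S Q.u)) * (F fTi * fT)))))) := by
        rw [hΔu]; simp only [hF]; simp only [mul_assoc]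
    _ = Tinv * (Tinv * (fTi * (F fT * (((Q.u * Q.S Q.u) ⊗ₜ[k] (Q.u * Q.S Q.u))
          * (F fTi * fT))))) := by
        rw [← mul_assoc (Q.u ⊗ₜ[k] Q.u), Algebra.TensorProduct.tmul_mul_tmul]
    _ = Tinv * (Tinv * (fTi * (F fT * ((F fTi * fT)
          * ((Q.u * Q.S Q.u) ⊗ₜ[k] (Q.u * Q.S Q.u)))))) := by
        rw [hcent]
    _ = Tinv * (Tinv * ((fTi * ((F fT * F fTi) * fT))
          * ((Q.u * Q.S Q.u) ⊗ₜ[k] (Q.u * Q.S Q.u)))) := by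
        simp only [mul_assoc]
    _ = Tinv * (Tinv * ((Q.u * Q.S Q.u) ⊗ₜ[k] (Q.u * Q.S Q.u))) := by
        rw [hFf, one_mul, hf_inv', one_mul]
    _ = ((Q.u * Q.S Q.u) ⊗ₜ[k] (Q.u * Q.S Q.u)) * (Tinv * Tinv) := by
        rw [← hcent Tinv, ← mul_assoc, ← hcent Tinv, mul_assoc]
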